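/- Let U be an antisymmetric p×p integer matrix, q an invertible element of a commutative domain R, and T(U) the quantum torus R⟨x_1^{±1},...,x_p^{±1}⟩/(x_i x_j = q^{U_{ij}} x_j x_i). For each positive integer n there is a unique R-algebra homomorphism F_n : T(n²U) → T(U) with F_n(x_i) = x_i^n, and F_n is injective. -/

import Mathlib

open scoped BigOperators

/-- Exponent appearing in the Weyl normalization of a monomial:
`∑_{i<j} U_{ij} k_i k_j`. -/
def weylExp {p : ℕ} (U : Matrix (Fin p) (Fin p) ℤ) (k : Fin p → ℤ) : ℤ :=
  ∑ i, ∑ j, if i < j then U i j * k i * k j else 0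

/-- The ordered product `x₁^{k₁} ⋯ x_p^{k_p}`. -/
def orderedProd {p : ℕ} {A : Type} [Monoid A] (x : Fin p → Aˣ) (k : Fin p → ℤ) : A :=
  (((List.finRange p).map fun i => ((x i ^ k i : Aˣ) : A)).prod)

/-- The Weyl-normalized monomial
`X^k = q^{-(1/2)∑_{i<j} U_{ij} k_i k_j} x₁^{k₁} ⋯ x_p^{k_p}`, where `s = q^{1/2}`. -/
def normMono {R : Type} [CommRing R] {p : ℕ} {A : Type} [Ring A] [Algebra R A]
    (s : Rˣ) (U : Matrix (Fin p) (Fin p) ℤ) (x : Fin p → Aˣ) (k : Fin p → ℤ) : A :=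
  ((s ^ (-(weylExp U k)) : Rˣ) : R) • orderedProd x k

/-- The antisymmetric bilinear form `⟨k,n⟩_U = ∑_{i,j} U_{ij} k_i n_j`. -/
def formU {p : ℕ} (U : Matrix (Fin p) (Fin p) ℤ) (k n : Fin p → ℤ) : ℤ :=
  ∑ i, ∑ j, U i j * k i * n j

/-- `A` (with distinguished invertible generators `x i` and basis `b` of normalized
monomials) is the quantum torus over `R` associated to `U` with quantum parameter
`q = s²`: the generators satisfy `x_i x_j = q^{U_{ij}} x_j x_i` and the Weyl-normalized
monomials `X^k`, `k ∈ ℤ^p`, form an `R`-basis of `A`. -/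
def IsQuantumTorus {R : Type} [CommRing R] {p : ℕ} {A : Type} [Ring A] [Algebra R A]
    (s : Rˣ) (U : Matrix (Fin p) (Fin p) ℤ) (x : Fin p → Aˣ)
    (b : Module.Basis (Fin p → ℤ) R A) : Prop :=
  (∀ i j, (x i : A) * (x j : A) = ((s ^ (2 * U i j) : Rˣ) : R) • ((x j : A) * (x i : A)))
  ∧ ∀ k : Fin p → ℤ, b k = normMono s U x k

section GroupHelpers
variable {G : Type*} [Group G] {ι : Type*}

lemma qt_step1 {z a b : G} (hz : ∀ g, z * g = g * z) (h : a * b = z * (b * a)) (t : ℤ) :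
    a * b ^ t = z ^ t * (b ^ t * a) := by
  have hconj : (MulAut.conj a) b = z * b := by
    rw [MulAut.conj_apply, h]; group
  have key : (MulAut.conj a) (b ^ t) = z ^ t * b ^ t := by
    rw [map_zpow, hconj, Commute.mul_zpow]
    exact (hz b)
  rw [MulAut.conj_apply] at key
  calc a * b ^ t = a * b ^ t * a⁻¹ * a := by group
    _ = z ^ t * b ^ t * a := by rw [key]
    _ = z ^ t * (b ^ t * a) := by rw [mul_assoc]

lemma qt_zpow_comm {z a b : G} (hz : ∀ g, z * g = g * z) (h : a * b = z * (b * a)) (m t : ℤ) :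
    a ^ m * b ^ t = z ^ (m * t) * (b ^ t * a ^ m) := by
  have hz' : ∀ g : G, z ^ (-t) * g = g * z ^ (-t) := fun g =>
    (Commute.zpow_left (hz g) (-t)).eq
  have h2 : b ^ t * a = z ^ (-t) * (a * b ^ t) := by
    rw [qt_step1 hz h t, zpow_neg, ← mul_assoc, ← mul_assoc, inv_mul_cancel, one_mul]
  have key := qt_step1 hz' h2 m
  rw [← zpow_mul] at key
  rw [key, ← mul_assoc, ← zpow_add, show m * t + -t * m = 0 by ring, zpow_zero, one_mul]

lemma qt_pass (u c : ι → G) (v : G) (hc : ∀ i g, c i * g = g * c i) :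
    ∀ L : List ι, (∀ i ∈ L, u i * v = c i * (v * u i)) →
    (L.map u).prod * v = (L.map c).prod * (v * (L.map u).prod) := by
  intro L
  induction L with
  | nil => simp
  | cons a T ih =>
    intro h
    simp only [List.map_cons, List.prod_cons]
    calc u a * (T.map u).prod * v
        = u a * ((T.map u).prod * v) := by rw [mul_assoc]
      _ = u a * ((T.map c).prod * (v * (T.map u).prod)) := by
          rw [ih (fun i hi => h i (List.mem_cons_of_mem a hi))]
      _ = (T.map c).prod * (u a * v) * (T.map u).prod := by
          have : u a * (T.map c).prod = (T.map c).prod * u a := by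
            refine (Commute.list_prod_right _ _ fun x hx => ?_).eq
            obtain ⟨i, _, rfl⟩ := List.mem_map.mp hx
            exact (hc i (u a)).symm
          rw [← mul_assoc, this]; group
      _ = (T.map c).prod * (c a * (v * u a)) * (T.map u).prod := by
          rw [h a (List.mem_cons_self)]
      _ = c a * (T.map c).prod * (v * (u a * (T.map u).prod)) := by
          rw [hc a ((T.map c).prod)]; group

/-- Scalar accumulated when merging two ordered products. -/
def qtC (z : ι → ι → G) (k m : ι → ℤ) : List ι → G
  | [] => 1
  | a :: T => ((T.map fun j => z j a ^ (k j * m a)).prod) * qtC z k m T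

lemma qtC_central (z : ι → ι → G) (hz : ∀ i j g, z i j * g = g * z i j)
    (k m : ι → ℤ) : ∀ (L : List ι) (g : G), qtC z k m L * g = g * qtC z k m L := by
  intro L
  induction L with
  | nil => simp [qtC]
  | cons a T ih =>
    intro g
    simp only [qtC]
    have h1 : ∀ h : G, (T.map fun j => z j a ^ (k j * m a)).prod * h
        = h * (T.map fun j => z j a ^ (k j * m a)).prod := by
      intro h
      refine (Commute.list_prod_left _ _ fun y hy => ?_).symm.eq.symm
      obtain ⟨i, _, rfl⟩ := List.mem_map.mp hy
      exact Commute.zpow_left (hz i a h) _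
    rw [mul_assoc, ih g, ← mul_assoc, h1 g, mul_assoc]

lemma qt_merge (x : ι → G) (z : ι → ι → G) (hz : ∀ i j g, z i j * g = g * z i j)
    (hx : ∀ i j, x i * x j = z i j * (x j * x i)) (k m : ι → ℤ) :
    ∀ L : List ι, (L.map fun i => x i ^ k i).prod * (L.map fun i => x i ^ m i).prod
      = qtC z k m L * (L.map fun i => x i ^ (k i + m i)).prod := by
  intro L
  induction L with
  | nil => simp [qtC]
  | cons a T ih =>
    simp only [List.map_cons, List.prod_cons, qtC]
    have hpass := qt_pass (fun j => x j ^ k j) (fun j => z j a ^ (k j * m a)) (x a ^ m a)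
      (fun i g => (Commute.zpow_left (hz i a g) _).eq) T
      (fun i _ => qt_zpow_comm (hz i a) (hx i a) (k i) (m a))
    have hcentral : ∀ (g : G), (T.map fun j => z j a ^ (k j * m a)).prod * g
        = g * (T.map fun j => z j a ^ (k j * m a)).prod := by
      intro g
      refine (Commute.list_prod_left _ _ fun y hy => ?_).symm.eq.symm
      obtain ⟨i, _, rfl⟩ := List.mem_map.mp hy
      exact Commute.zpow_left (hz i a g) _
    calc x a ^ k a * (T.map fun i => x i ^ k i).prod * (x a ^ m a * (T.map fun i => x i ^ m i).prod)
        = x a ^ k a * ((T.map fun i => x i ^ k i).prod * x a ^ m a) * (T.map fun i => x i ^ m i).prod := by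
          group
      _ = x a ^ k a * ((T.map fun j => z j a ^ (k j * m a)).prod * (x a ^ m a * (T.map fun i => x i ^ k i).prod)) * (T.map fun i => x i ^ m i).prod := by
          rw [hpass]
      _ = (T.map fun j => z j a ^ (k j * m a)).prod * (x a ^ (k a + m a) * ((T.map fun i => x i ^ k i).prod * (T.map fun i => x i ^ m i).prod)) := by
          rw [← mul_assoc, ← mul_assoc, ← hcentral (x a ^ k a), zpow_add]; group
      _ = (T.map fun j => z j a ^ (k j * m a)).prod * qtC z k m T * (x a ^ (k a + m a) * (T.map fun i => x i ^ (k i + m i)).prod) := by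
          rw [ih, ← mul_assoc (x a ^ (k a + m a)) (qtC z k m T),
            ← qtC_central z hz k m T (x a ^ (k a + m a))]; group
end GroupHelpers

/-- Cross-term exponent accumulated when merging ordered monomials, list version. -/
def crossE {p : ℕ} (U : Matrix (Fin p) (Fin p) ℤ) (k m : Fin p → ℤ) : List (Fin p) → ℤ
  | [] => 0
  | a :: T => (T.map fun j => U j a * (k j * m a)).sum + crossE U k m T

lemma sigma_pow_prod {R : Type} [CommRing R] {G : Type*} [Group G] (σ : Rˣ →* G) (s : Rˣ)
    {ι : Type*} (g : ι → ℤ) : ∀ T : List ι,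
    (T.map fun j => σ (s ^ g j)).prod = σ (s ^ (T.map g).sum) := by
  intro T
  induction T with
  | nil => simp
  | cons a T ih =>
    simp only [List.map_cons, List.prod_cons, List.sum_cons, map_zpow]
    simp only [map_zpow] at ih
    rw [ih, zpow_add]

lemma qtC_sigma {R : Type} [CommRing R] {G : Type*} [Group G] (σ : Rˣ →* G) (s : Rˣ)
    {p : ℕ} (U : Matrix (Fin p) (Fin p) ℤ) (k m : Fin p → ℤ) :
    ∀ L : List (Fin p), qtC (fun i j => σ (s ^ (2 * U i j))) k m L
      = σ (s ^ (2 * crossE U k m L)) := by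
  intro L
  induction L with
  | nil => simp [qtC, crossE]
  | cons a T ih =>
    simp only [qtC, crossE, ih]
    have e1 : ∀ j : Fin p, σ (s ^ (2 * U j a)) ^ (k j * m a)
        = σ (s ^ (2 * (U j a * (k j * m a)))) := by
      intro j
      rw [← map_zpow, ← zpow_mul]
      ring_nf
    simp only [e1]
    rw [sigma_pow_prod σ s (fun j => 2 * (U j a * (k j * m a))) T, ← map_mul, ← zpow_add]
    congr 1
    rw [List.sum_map_mul_left]
    rw [mul_add]

section QT
variable {R : Type} [CommRing R] {p : ℕ} {A : Type} [Ring A] [Algebra R A]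

/-- Units version of the algebra map. -/
noncomputable def σA (R : Type) [CommRing R] (A : Type) [Ring A] [Algebra R A] : Rˣ →* Aˣ :=
  Units.map (algebraMap R A : R →+* A).toMonoidHom

lemma sigma_central (r : Rˣ) (g : Aˣ) : σA R A r * g = g * σA R A r := by
  ext
  simp only [σA, Units.val_mul, Units.coe_map, RingHom.toMonoidHom_eq_coe, MonoidHom.coe_coe]
  exact Algebra.commutes _ _

lemma smul_eq_sigma_mul (r : Rˣ) (a : A) : ((r : R) • a) = ((σA R A r : Aˣ) : A) * a := by
  simp [σA, Algebra.smul_def]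

lemma qt_mul (s : Rˣ) (U : Matrix (Fin p) (Fin p) ℤ) (x : Fin p → Aˣ)
    (b : Module.Basis (Fin p → ℤ) R A) (hQT : IsQuantumTorus s U x b) (k m : Fin p → ℤ) :
    b k * b m = ((s ^ (2 * crossE U k m (List.finRange p) + weylExp U (k + m)
      - weylExp U k - weylExp U m) : Rˣ) : R) • b (k + m) := by
  have hz : ∀ i j g, (fun i j => σA R A (s ^ (2 * U i j))) i j * g
      = g * (fun i j => σA R A (s ^ (2 * U i j))) i j := fun i j g => sigma_central _ g
  have hx : ∀ i j, x i * x j = (fun i j => σA R A (s ^ (2 * U i j))) i j * (x j * x i) := by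
    intro i j
    ext
    have := hQT.1 i j
    rw [smul_eq_sigma_mul] at this
    simpa [mul_assoc] using this
  have hmerge := qt_merge x _ hz hx k m (List.finRange p)
  rw [qtC_sigma (σA R A) s U k m] at hmerge
  have hOP : orderedProd x k * orderedProd x m
      = ((s ^ (2 * crossE U k m (List.finRange p)) : Rˣ) : R) • orderedProd x (k + m) := by
    have := congrArg (Units.coeHom A) hmerge
    simp only [map_mul, map_list_prod, List.map_map] at this
    rw [smul_eq_sigma_mul]
    simp only [orderedProd, Pi.add_apply]
    convert this using 3 <;> rfl
  rw [hQT.2 k, hQT.2 m, hQT.2 (k + m)]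
  unfold normMono
  rw [smul_mul_assoc, mul_smul_comm, smul_smul, hOP, smul_smul, smul_smul]
  congr 1
  rw [← Units.val_mul, ← Units.val_mul, ← Units.val_mul, ← zpow_add, ← zpow_add, ← zpow_add]
  congr 1
  ring
end QT

section Scaling
variable {p : ℕ} (U : Matrix (Fin p) (Fin p) ℤ) (k m : Fin p → ℤ) (c : ℤ)

lemma weylExp_smul_mat : weylExp (c • U) k = c * weylExp U k := by
  simp only [weylExp, Finset.mul_sum]
  refine Finset.sum_congr rfl fun i _ => Finset.sum_congr rfl fun j _ => ?_
  split_ifs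
  · simp only [Matrix.smul_apply, smul_eq_mul]; ring
  · ring

lemma weylExp_smul_vec : weylExp U (c • k) = c ^ 2 * weylExp U k := by
  simp only [weylExp, Finset.mul_sum]
  refine Finset.sum_congr rfl fun i _ => Finset.sum_congr rfl fun j _ => ?_
  split_ifs
  · simp only [Pi.smul_apply, smul_eq_mul]; ring
  · ring

lemma crossE_smul_mat : ∀ L, crossE (c • U) k m L = c * crossE U k m L := by
  intro L
  induction L with
  | nil => simp [crossE]
  | cons a T ih =>
    simp only [crossE, ih]
    rw [show (T.map fun j => (c • U) j a * (k j * m a))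
        = T.map fun j => c * (U j a * (k j * m a)) from by
      refine List.map_congr_left fun j _ => ?_
      simp only [Matrix.smul_apply, smul_eq_mul]; ring]
    rw [List.sum_map_mul_left]; ring

lemma crossE_smul_vec : ∀ L, crossE U (c • k) (c • m) L = c ^ 2 * crossE U k m L := by
  intro L
  induction L with
  | nil => simp [crossE]
  | cons a T ih =>
    simp only [crossE, ih]
    rw [show (T.map fun j => U j a * ((c • k) j * (c • m) a))
        = T.map fun j => c ^ 2 * (U j a * (k j * m a)) from by
      refine List.map_congr_left fun j _ => ?_
      simp only [Pi.smul_apply, smul_eq_mul]; ring]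
    rw [List.sum_map_mul_left]; ring
end Scaling

section Degenerate
variable {R : Type} [CommRing R] {p : ℕ} {A : Type} [Ring A] [Algebra R A]
  (s : Rˣ) (U : Matrix (Fin p) (Fin p) ℤ) (x : Fin p → Aˣ)

lemma weylExp_zero : weylExp U (0 : Fin p → ℤ) = 0 := by
  simp [weylExp]

lemma normMono_zero : normMono s U x 0 = 1 := by
  simp [normMono, weylExp_zero, orderedProd]

lemma weylExp_single (i : Fin p) (t : ℤ) : weylExp U (Pi.single i t) = 0 := by
  refine Finset.sum_eq_zero fun a _ => Finset.sum_eq_zero fun j _ => ?_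
  split_ifs with h
  · rcases eq_or_ne a i with rfl | ha
    · rw [Pi.single_eq_of_ne (ne_of_gt h), mul_zero]
    · rw [Pi.single_eq_of_ne ha, mul_zero, zero_mul]
  · rfl

lemma normMono_single (i : Fin p) (t : ℤ) :
    normMono s U x (Pi.single i t) = ((x i ^ t : Aˣ) : A) := by
  rw [normMono, weylExp_single, neg_zero, zpow_zero, Units.val_one, one_smul, orderedProd]
  rw [List.prod_map_eq_pow_single i _ (fun a' ha' _ => by
    rw [Pi.single_eq_of_ne ha', zpow_zero, Units.val_one])]
  rw [List.count_eq_one_of_mem (List.nodup_finRange p) (List.mem_finRange i), pow_one,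
    Pi.single_eq_same]
end Degenerate


/-- Frobenius homomorphism of quantum tori: if `A` is the quantum torus for `n²U` and
`B` the quantum torus for `U` (over a commutative domain `R`, same `q^{1/2} = s`, `U`
antisymmetric), then there is a unique `R`-algebra homomorphism `F : A → B` with
`F(x_i) = x_iⁿ`, and any such homomorphism is injective. -/

theorem frobenius_quantumTorus {R : Type} [CommRing R] [IsDomain R] {p : ℕ} (s : Rˣ)
    (U : Matrix (Fin p) (Fin p) ℤ) (hU : ∀ i j, U j i = -U i j)
    (n : ℕ) (hn : 0 < n)
    {A B : Type} [Ring A] [Algebra R A] [Ring B] [Algebra R B]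
    (xA : Fin p → Aˣ) (bA : Module.Basis (Fin p → ℤ) R A)
    (hA : IsQuantumTorus s (((n : ℤ) ^ 2) • U) xA bA)
    (xB : Fin p → Bˣ) (bB : Module.Basis (Fin p → ℤ) R B)
    (hB : IsQuantumTorus s U xB bB) :
    (∃! F : A →ₐ[R] B, ∀ i, F ((xA i : A)) = ((xB i : B)) ^ n)
    ∧ ∀ F : A →ₐ[R] B, (∀ i, F ((xA i : A)) = ((xB i : B)) ^ n) → Function.Injective F := by
  classical
  have hNe : ((n : ℤ)) ≠ 0 := by exact_mod_cast hn.ne'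
  have hval : ∀ (F : A →ₐ[R] B), (∀ i, F ((xA i : A)) = ((xB i : B)) ^ n) →
      ∀ k : Fin p → ℤ, F (bA k) = bB ((n : ℤ) • k) := by
    intro F hF k
    have hu : ∀ i, Units.map (F : A →+* B).toMonoidHom (xA i) = xB i ^ n := by
      intro i; ext; simp [hF i]
    have hOP : F (orderedProd xA k) = orderedProd xB ((n : ℤ) • k) := by
      unfold orderedProd
      rw [map_list_prod F, List.map_map]
      refine congrArg List.prod (List.map_congr_left fun i _ => ?_)
      show F ((xA i ^ k i : Aˣ) : A) = ((xB i ^ ((n : ℤ) • k) i : Bˣ) : B)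
      have h1 : F ((xA i ^ k i : Aˣ) : A)
          = ((Units.map (F : A →+* B).toMonoidHom (xA i ^ k i) : Bˣ) : B) :=
        (Units.coe_map _ _).symm
      rw [h1, map_zpow, hu i, ← zpow_natCast (xB i) n, ← zpow_mul]
      rfl
    have hw : weylExp (((n : ℤ) ^ 2) • U) k = weylExp U ((n : ℤ) • k) := by
      rw [weylExp_smul_mat, weylExp_smul_vec]
    rw [hA.2 k, normMono, map_smul, hOP, hB.2 ((n : ℤ) • k), normMono, hw]
  set g : (Fin p → ℤ) → B := fun k => bB ((n : ℤ) • k) with hg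
  set Flin : A →ₗ[R] B := bA.constr R g with hFlindef
  have hFb : ∀ k, Flin (bA k) = bB ((n : ℤ) • k) := fun k => bA.constr_basis R g k
  have hone : Flin 1 = 1 := by
    have h1 : (1 : A) = bA 0 := by rw [hA.2 0, normMono_zero]
    rw [h1, hFb, smul_zero, hB.2 0, normMono_zero]
  have hexp : ∀ k m : Fin p → ℤ,
      (2 * crossE (((n : ℤ) ^ 2) • U) k m (List.finRange p)
        + weylExp (((n : ℤ) ^ 2) • U) (k + m)
        - weylExp (((n : ℤ) ^ 2) • U) k - weylExp (((n : ℤ) ^ 2) • U) m)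
      = (2 * crossE U ((n : ℤ) • k) ((n : ℤ) • m) (List.finRange p)
        + weylExp U ((n : ℤ) • k + (n : ℤ) • m)
        - weylExp U ((n : ℤ) • k) - weylExp U ((n : ℤ) • m)) := by
    intro k m
    rw [← smul_add, weylExp_smul_mat, weylExp_smul_mat, weylExp_smul_mat,
      weylExp_smul_vec, weylExp_smul_vec, weylExp_smul_vec,
      crossE_smul_mat, crossE_smul_vec]
  have hmulb : ∀ k m : Fin p → ℤ, Flin (bA k * bA m) = Flin (bA k) * Flin (bA m) := by
    intro k m
    rw [qt_mul s _ xA bA hA k m, map_smul, hFb, hFb, hFb,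
      qt_mul s U xB bB hB ((n : ℤ) • k) ((n : ℤ) • m), hexp k m, smul_add]
  have hmul : ∀ a b : A, Flin (a * b) = Flin a * Flin b := by
    intro a b
    have hbil : (LinearMap.mul R A).compr₂ Flin
        = (LinearMap.mul R B).compl₁₂ Flin Flin := by
      refine bA.ext fun k => bA.ext fun m => ?_
      simpa only [LinearMap.compr₂_apply, LinearMap.mul_apply', LinearMap.compl₁₂_apply]
        using hmulb k m
    have := LinearMap.congr_fun (LinearMap.congr_fun hbil a) b
    simpa only [LinearMap.compr₂_apply, LinearMap.mul_apply', LinearMap.compl₁₂_apply]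
      using this
  set F : A →ₐ[R] B := AlgHom.ofLinearMap Flin hone hmul with hFdef
  have hFprop : ∀ i, F ((xA i : A)) = ((xB i : B)) ^ n := by
    intro i
    have h1 : (xA i : A) = bA (Pi.single i 1) := by
      rw [hA.2, normMono_single, zpow_one]
    have h2 : ((n : ℤ) • Pi.single i (1 : ℤ)) = (Pi.single i ((n : ℤ)) : Fin p → ℤ) := by
      funext j
      rcases eq_or_ne j i with rfl | hj
      · simp
      · simp [Pi.single_eq_of_ne hj]
    show Flin ((xA i : A)) = _
    rw [h1, hFb, h2, hB.2, normMono_single, zpow_natCast, Units.val_pow_eq_pow_val]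
  refine ⟨⟨F, hFprop, ?_⟩, ?_⟩
  · intro F' hF'
    have h1 := hval F' hF'
    have h2 := hval F hFprop
    have hlin : F'.toLinearMap = F.toLinearMap := bA.ext fun k => by
      rw [AlgHom.toLinearMap_apply, AlgHom.toLinearMap_apply, h1, h2]
    exact AlgHom.ext fun a => LinearMap.congr_fun hlin a
  · intro F' hF'
    have hk := hval F' hF'
    have hinj : Function.Injective fun k : Fin p → ℤ => (n : ℤ) • k :=
      smul_right_injective _ hNe
    have hli : LinearIndependent R fun k : Fin p → ℤ => bB ((n : ℤ) • k) :=
      bB.linearIndependent.comp (fun k : Fin p → ℤ => (n : ℤ) • k) hinj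
    have h0 : ∀ a : A, F' a = 0 → a = 0 := by
      intro a ha
      have hrep := Module.Basis.linearCombination_repr bA a
      have happ : Finsupp.linearCombination R (⇑F'.toLinearMap ∘ ⇑bA) (bA.repr a) = 0 := by
        rw [← Finsupp.apply_linearCombination R F'.toLinearMap (⇑bA) (bA.repr a), hrep]
        simpa using ha
      have hfb : (⇑F'.toLinearMap ∘ ⇑bA) = fun k => bB ((n : ℤ) • k) := funext fun k => hk k
      rw [hfb] at happ
      have hz := linearIndependent_iff.mp hli _ happ
      rw [← hrep, hz, map_zero]
    intro a b hab
    have := h0 (a - b) (by rw [map_sub, hab, sub_self])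
    exact sub_eq_zero.mp this
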